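/- Let F be a d-dimensional cellular automaton on a finite nonempty alphabet A, and let F↑ be its canonical lift to dimension d+1, the map on A^{ℤ^{d+1}} (identifying ℤ^{d+1} with ℤ^d × ℤ) defined by F↑(x)(z,k) = F(x(·,k))(z), i.e., F applied separately to each slice x(·,k) : ℤ^d → A. Then F has an equicontinuous point if and only if F↑ has an equicontinuous point. -/

import Mathlib

open Function

/-- Configuration space: `d`-dimensional configurations over alphabet `A`. -/
abbrev Config (d : ℕ) (A : Type*) := (Fin d → ℤ) → A

/-- Sup norm of a lattice point. -/
def normInf {d : ℕ} (i : Fin d → ℤ) : ℕ := Finset.univ.sup fun k => (i k).natAbs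

open Classical in
noncomputable def distC {d : ℕ} {A : Type*} (x y : Config d A) : ℝ :=
  if x = y then 0
  else (2 : ℝ) ^ (-((sInf {n : ℕ | ∃ i, normInf i = n ∧ x i ≠ y i} : ℕ) : ℤ))

/-- The shift by `v`. -/
def shiftCA {d : ℕ} {A : Type*} (v : Fin d → ℤ) (x : Config d A) : Config d A :=
  fun z => x (z + v)

/-- `F` is a cellular automaton: continuous (w.r.t. the Cantor metric) and shift-commuting. -/
def IsCA {d : ℕ} {A : Type*} (F : Config d A → Config d A) : Prop :=
  (∀ x : Config d A, ∀ ε > (0:ℝ), ∃ δ > (0:ℝ), ∀ y, distC x y < δ → distC (F x) (F y) < ε) ∧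
  (∀ (v : Fin d → ℤ) (x : Config d A), F (shiftCA v x) = shiftCA v (F x))

/-- `x` is an equicontinuous point of `F`. -/
def IsEquiPoint {d : ℕ} {A : Type*} (F : Config d A → Config d A) (x : Config d A) : Prop :=
  ∀ ε > (0:ℝ), ∃ δ > (0:ℝ), ∀ y, distC x y < δ → ∀ t : ℕ, distC (F^[t] x) (F^[t] y) < ε

/-- `F` is sensitive to initial conditions. -/
def Sensitive {d : ℕ} {A : Type*} (F : Config d A → Config d A) : Prop :=
  ∃ ε > (0:ℝ), ∀ x : Config d A, ∀ δ > (0:ℝ),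
    ∃ y, ∃ t : ℕ, distC x y < δ ∧ distC (F^[t] x) (F^[t] y) > ε

/-- `ε` is a sensitivity constant for `F`. -/
def IsSensConst {d : ℕ} {A : Type*} (F : Config d A → Config d A) (ε : ℝ) : Prop :=
  ∀ x : Config d A, ∀ δ > (0:ℝ),
    ∃ y, ∃ t : ℕ, distC x y < δ ∧ distC (F^[t] x) (F^[t] y) ≥ ε

/-- Canonical lift of a `d`-dimensional CA to dimension `d+1`:
`F` is applied separately to each slice (last coordinate fixed). -/
def liftCA {d : ℕ} {A : Type*} (F : Config d A → Config d A) :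
    Config (d+1) A → Config (d+1) A :=
  fun x z => F (fun w => x (Fin.snoc w (z (Fin.last d)))) (fun k => z k.castSucc)

/-- The tile set `(T,H,V)` tiles the plane. -/
def TilesPlane {T : Type*} (H V : Set (T × T)) : Prop :=
  ∃ c : ℤ × ℤ → T, ∀ z : ℤ × ℤ, (c z, c (z + (1,0))) ∈ H ∧ (c z, c (z + (0,1))) ∈ V

/-- The tile set `(T,H,V)` admits a valid tiling of the `m × m` square. -/
def TilesSquare {T : Type*} (H V : Set (T × T)) (m : ℕ) : Prop :=
  ∃ c : ℕ → ℕ → T,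
    (∀ i j, i + 1 < m → j < m → (c i j, c (i+1) j) ∈ H) ∧
    (∀ i j, i < m → j + 1 < m → (c i j, c i (j+1)) ∈ V)

/-- Local rules of `d`-dimensional CA with `n+1` states and radius `r`. -/
abbrev LocalRule (d n r : ℕ) := ((Fin d → Fin (2*r+1)) → Fin (n+1)) → Fin (n+1)

/-- Codes of `d`-dimensional cellular automata: number of states, radius, local rule. -/
abbrev CACode (d : ℕ) := Σ n : ℕ, Σ r : ℕ, LocalRule d n r

/-- An upper bound for the number of local rules. -/
abbrev ruleBound (d n r : ℕ) : ℕ := (n+1) ^ ((n+1) ^ ((2*r+1) ^ d))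

/-- Local rules are in bijection with `Fin (ruleBound d n r)`. -/
def ruleEquiv (d n r : ℕ) : LocalRule d n r ≃ Fin (ruleBound d n r) :=
  (Equiv.arrowCongr
      ((Equiv.arrowCongr finFunctionFinEquiv (Equiv.refl (Fin (n+1)))).trans finFunctionFinEquiv)
      (Equiv.refl (Fin (n+1)))).trans finFunctionFinEquiv

theorem primrec_ruleBound (d : ℕ) :
    Primrec fun t : ℕ × ℕ × ℕ => ruleBound d t.1 t.2.1 := by
  have hpow : Primrec₂ (fun a b : ℕ => a ^ b) := Primrec₂.unpaired'.mp Nat.Primrec.pow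
  have h1 : Primrec fun t : ℕ × ℕ × ℕ => t.1 + 1 := Primrec.succ.comp Primrec.fst
  have h2 : Primrec fun t : ℕ × ℕ × ℕ => (2 * t.2.1 + 1) ^ d :=
    hpow.comp (Primrec.succ.comp
      (Primrec.nat_mul.comp (Primrec.const 2) (Primrec.fst.comp Primrec.snd)))
      (Primrec.const d)
  have h3 : Primrec fun t : ℕ × ℕ × ℕ => (t.1 + 1) ^ ((2 * t.2.1 + 1) ^ d) := hpow.comp h1 h2
  exact hpow.comp h1 h3

theorem primrec_valid (d : ℕ) :
    PrimrecPred fun t : ℕ × ℕ × ℕ => t.2.2 < ruleBound d t.1 t.2.1 :=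
  Primrec.nat_lt.comp (Primrec.snd.comp Primrec.snd) (primrec_ruleBound d)

instance validCodePrimcodable (d : ℕ) :
    Primcodable {t : ℕ × ℕ × ℕ // t.2.2 < ruleBound d t.1 t.2.1} :=
  Primcodable.subtype (primrec_valid d)

/-- CA codes, encoded as triples of natural numbers. -/
def codeEquiv (d : ℕ) : CACode d ≃ {t : ℕ × ℕ × ℕ // t.2.2 < ruleBound d t.1 t.2.1} where
  toFun c := ⟨(c.1, c.2.1, (ruleEquiv d c.1 c.2.1 c.2.2).val), (ruleEquiv d c.1 c.2.1 c.2.2).isLt⟩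
  invFun t := ⟨t.1.1, t.1.2.1, (ruleEquiv d t.1.1 t.1.2.1).symm ⟨t.1.2.2, t.2⟩⟩
  left_inv c := by rcases c with ⟨n, r, f⟩; simp
  right_inv t := by rcases t with ⟨⟨n, r, k⟩, h⟩; simp

instance CACodePrimcodable (d : ℕ) : Primcodable (CACode d) :=
  Primcodable.ofEquiv _ (codeEquiv d)

/-- The global CA induced by a code. -/
def codeCA (d : ℕ) (c : CACode d) :
    Config d (Fin (c.1 + 1)) → Config d (Fin (c.1 + 1)) :=
  fun x z => c.2.2 (fun u => x (fun k => z k + ((u k : ℕ) : ℤ) - ((c.2.1 : ℕ) : ℤ)))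


section LiftProof

variable {d : ℕ} {A : Type*}

/-- Agreement on the ball of radius `n`. -/
def agreeOn {d : ℕ} {A : Type*} (x y : Config d A) (n : ℕ) : Prop :=
  ∀ i, normInf i ≤ n → x i = y i

lemma distC_lt_iff (x y : Config d A) (n : ℕ) :
    distC x y < (2:ℝ) ^ (-(n:ℤ)) ↔ agreeOn x y n := by
  classical
  unfold distC
  split_ifs with h
  · constructor
    · intro _ i _; rw [h]
    · intro _; positivity
  · obtain ⟨i, hi⟩ : ∃ i, x i ≠ y i := by
      by_contra hc; push_neg at hc; exact h (funext hc)
    have hne : {m : ℕ | ∃ i, normInf i = m ∧ x i ≠ y i}.Nonempty := ⟨normInf i, i, rfl, hi⟩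
    rw [zpow_lt_zpow_iff_right₀ (by norm_num : (1:ℝ) < 2), neg_lt_neg_iff, Int.ofNat_lt]
    constructor
    · intro hlt j hj
      by_contra hne'
      exact absurd (le_trans (Nat.sInf_le (show normInf j ∈ {m : ℕ | ∃ i, normInf i = m ∧ x i ≠ y i} from ⟨j, rfl, hne'⟩)) hj) (Nat.not_le.mpr hlt)
    · intro hag
      obtain ⟨j, hj, hxy⟩ := Nat.sInf_mem hne
      by_contra hle
      push_neg at hle
      exact hxy (hag j (hj ▸ hle))

lemma exists_two_zpow_lt {ε : ℝ} (h : 0 < ε) : ∃ n : ℕ, (2:ℝ) ^ (-(n:ℤ)) < ε := by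
  obtain ⟨n, hn⟩ := exists_pow_lt_of_lt_one h (by norm_num : (1/2:ℝ) < 1)
  rw [one_div, inv_pow] at hn
  exact ⟨n, by rwa [zpow_neg, zpow_natCast]⟩

/-- Combinatorial characterization of equicontinuous points. -/
lemma isEquiPoint_iff (F : Config d A → Config d A) (x : Config d A) :
    IsEquiPoint F x ↔
      ∀ m : ℕ, ∃ n : ℕ, ∀ y, agreeOn x y n → ∀ t, agreeOn (F^[t] x) (F^[t] y) m := by
  constructor
  · intro hE m
    obtain ⟨δ, hδ, hP⟩ := hE ((2:ℝ) ^ (-(m:ℤ))) (by positivity)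
    obtain ⟨n, hn⟩ := exists_two_zpow_lt hδ
    refine ⟨n, fun y hy t => ?_⟩
    exact (distC_lt_iff _ _ m).mp (hP y (lt_trans ((distC_lt_iff x y n).mpr hy) hn) t)
  · intro hC ε hε
    obtain ⟨m, hm⟩ := exists_two_zpow_lt hε
    obtain ⟨n, hn⟩ := hC m
    refine ⟨(2:ℝ) ^ (-(n:ℤ)), by positivity, fun y hy t => ?_⟩
    exact lt_trans ((distC_lt_iff _ _ m).mpr (hn y ((distC_lt_iff x y n).mp hy) t)) hm

/-- The slice of a `(d+1)`-dimensional configuration at last coordinate `k`. -/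
def sliceAt (x : Config (d+1) A) (k : ℤ) : Config d A := fun w => x (Fin.snoc w k)

lemma sliceAt_lift (F : Config d A → Config d A) (x : Config (d+1) A) (k : ℤ) :
    sliceAt (liftCA F x) k = F (sliceAt x k) := by
  funext w
  simp only [sliceAt, liftCA, Fin.snoc_last, Fin.snoc_castSucc]
  rfl

lemma sliceAt_lift_iter (F : Config d A → Config d A) (x : Config (d+1) A) (k : ℤ) (t : ℕ) :
    sliceAt ((liftCA F)^[t] x) k = F^[t] (sliceAt x k) := by
  induction t generalizing x with
  | zero => rfl
  | succ t ih =>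
      rw [Function.iterate_succ_apply, Function.iterate_succ_apply, ih, sliceAt_lift]

lemma normInf_init_le (z : Fin (d+1) → ℤ) : normInf (Fin.init z) ≤ normInf z :=
  Finset.sup_le fun i _ => Finset.le_sup (f := fun k => (z k).natAbs) (Finset.mem_univ i.castSucc)

lemma natAbs_last_le (z : Fin (d+1) → ℤ) : (z (Fin.last d)).natAbs ≤ normInf z :=
  Finset.le_sup (f := fun k => (z k).natAbs) (Finset.mem_univ (Fin.last d))

lemma normInf_snoc_le {w : Fin d → ℤ} {k : ℤ} {n : ℕ}
    (hw : normInf w ≤ n) (hk : k.natAbs ≤ n) : normInf (Fin.snoc w k) ≤ n := by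
  refine Finset.sup_le fun j _ => ?_
  refine Fin.lastCases ?_ (fun i => ?_) j
  · simpa using hk
  · simp only [Fin.snoc_castSucc]
    exact le_trans (Finset.le_sup (f := fun k => (w k).natAbs) (Finset.mem_univ i)) hw

/-- a `d`-dimensional CA has an equicontinuous point iff its canonical
lift to dimension `d+1` has an equicontinuous point. -/
theorem lift_equicontinuous_point_iff
    {d : ℕ} (hd : 1 ≤ d) (A : Type) [Fintype A] [Nonempty A]
    (F : Config d A → Config d A) (hF : IsCA F) :
    (∃ x, IsEquiPoint F x) ↔ (∃ x, IsEquiPoint (liftCA F) x) := by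
  constructor
  · rintro ⟨x, hx⟩
    rw [isEquiPoint_iff] at hx
    -- lift x constantly in the last coordinate
    refine ⟨fun z => x (Fin.init z), ?_⟩
    rw [isEquiPoint_iff]
    intro m
    obtain ⟨n, hn⟩ := hx m
    refine ⟨max n m, fun y hy t z hz => ?_⟩
    set k : ℤ := z (Fin.last d) with hk
    have hslice : sliceAt (fun z : Fin (d+1) → ℤ => x (Fin.init z)) k = x := by
      funext w
      simp [sliceAt, Fin.init_snoc]
    have hagree : agreeOn x (sliceAt y k) n := by
      intro i hi
      have h1 : normInf (Fin.snoc i k : Fin (d+1) → ℤ) ≤ max n m :=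
        normInf_snoc_le (le_trans hi (le_max_left n m))
          (le_trans (le_trans (natAbs_last_le z) hz) (le_max_right n m))
      have := hy (Fin.snoc i k) h1
      simpa [sliceAt, Fin.init_snoc] using this
    have hres := hn (sliceAt y k) hagree t (Fin.init z) (le_trans (normInf_init_le z) hz)
    have e1 : (liftCA F)^[t] (fun z : Fin (d+1) → ℤ => x (Fin.init z)) z
        = F^[t] x (Fin.init z) := by
      have := congrFun (sliceAt_lift_iter F (fun z : Fin (d+1) → ℤ => x (Fin.init z)) k t)
        (Fin.init z)
      rw [hslice] at this
      simpa [sliceAt, hk, Fin.snoc_init_self] using this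
    have e2 : (liftCA F)^[t] y z = F^[t] (sliceAt y k) (Fin.init z) := by
      have := congrFun (sliceAt_lift_iter F y k t) (Fin.init z)
      simpa [sliceAt, hk, Fin.snoc_init_self] using this
    rw [e1, e2]
    exact hres
  · rintro ⟨y, hy⟩
    rw [isEquiPoint_iff] at hy
    refine ⟨sliceAt y 0, ?_⟩
    rw [isEquiPoint_iff]
    intro m
    obtain ⟨n, hn⟩ := hy m
    refine ⟨n, fun z hz t i hi => ?_⟩
    classical
    -- modify y on the 0-slice to be z
    set y' : Config (d+1) A :=
      fun w => if w (Fin.last d) = 0 then z (Fin.init w) else y w with hy'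
    have hsy' : sliceAt y' 0 = z := by
      funext w
      simp [sliceAt, y', Fin.snoc_last, Fin.init_snoc]
    have hagree : agreeOn y y' n := by
      intro w hw
      by_cases h0 : w (Fin.last d) = 0
      · have hww : w = Fin.snoc (Fin.init w) (0:ℤ) := by
          rw [← h0]; exact (Fin.snoc_init_self w).symm
        have : y w = z (Fin.init w) := by
          have h1 : y w = sliceAt y 0 (Fin.init w) := congrArg y hww
          rw [h1, hz (Fin.init w) (le_trans (normInf_init_le w) hw)]
        simp [y', h0, this]
      · simp [y', h0]
    have hres := hn y' hagree t (Fin.snoc i 0)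
      (normInf_snoc_le hi (by simp))
    have e1 : (liftCA F)^[t] y (Fin.snoc i 0) = F^[t] (sliceAt y 0) i := by
      have := congrFun (sliceAt_lift_iter F y 0 t) i
      simpa [sliceAt] using this
    have e2 : (liftCA F)^[t] y' (Fin.snoc i 0) = F^[t] z i := by
      have := congrFun (sliceAt_lift_iter F y' 0 t) i
      rw [hsy'] at this
      simpa [sliceAt] using this
    rw [← e1, ← e2]
    exact hres

end LiftProof
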